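/- Let X be an n×d real matrix with 𝕏 = XᵀX, and let M₂ be a non-singular positive semi-definite n×n diagonal matrix with diagonal entries p₁, …, p_n > 0, and 𝕏̂ = XᵀM₂X. Then the effective inverse condition numbers satisfy σ⁺min(𝕏̂)/‖𝕏̂‖ ≤ (max_{i=1,…,n} p_i / min_{i=1,…,n} p_i) · σ⁺min(𝕏)/‖𝕏‖, where σ⁺min denotes the smallest non-zero singular value and ‖·‖ the spectral norm. -/

import Mathlib

open Matrix MeasureTheory ProbabilityTheory Filter
open scoped BigOperators

noncomputable section

/-- Euclidean norm of a vector in `Fin n → ℝ`. -/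
def l2norm {n : ℕ} (v : Fin n → ℝ) : ℝ := Real.sqrt (∑ i, (v i) ^ 2)

/-- Spectral norm (ℓ²-operator norm) of a real matrix. -/
def specNorm {m n : ℕ} (A : Matrix (Fin m) (Fin n) ℝ) : ℝ :=
  sSup {c : ℝ | ∃ v : Fin n → ℝ, l2norm v = 1 ∧ c = l2norm (A *ᵥ v)}

/-- The smallest non-zero singular value of a real matrix:
the infimum of all positive `s` such that `s ^ 2` is an eigenvalue of `AᵀA`. -/
def sigmaMinPos {m n : ℕ} (A : Matrix (Fin m) (Fin n) ℝ) : ℝ :=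
  sInf {s : ℝ | 0 < s ∧ ∃ v : Fin n → ℝ, v ≠ 0 ∧ (Aᵀ * A) *ᵥ v = (s ^ 2) • v}

/-- `B` is the Moore–Penrose pseudo-inverse of `A` (the four Penrose conditions). -/
def IsMoorePenrose {m n : ℕ} (A : Matrix (Fin m) (Fin n) ℝ)
    (B : Matrix (Fin n) (Fin m) ℝ) : Prop :=
  A * B * A = A ∧ B * A * B = B ∧ (A * B)ᵀ = A * B ∧ (B * A)ᵀ = B * A

/-- `w` lies in the orthogonal complement of `ker A`. -/
def perpKer {m n : ℕ} (A : Matrix (Fin m) (Fin n) ℝ) (w : Fin n → ℝ) : Prop :=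
  ∀ v : Fin n → ℝ, A *ᵥ v = 0 → w ⬝ᵥ v = 0

/-- Entrywise expectation of a random matrix. -/
def matExp {Ω : Type*} [MeasurableSpace Ω] (μ : Measure Ω) {m n : ℕ}
    (M : Ω → Matrix (Fin m) (Fin n) ℝ) : Matrix (Fin m) (Fin n) ℝ :=
  Matrix.of fun i j => ∫ ω, M ω i j ∂μ

/-- Entrywise expectation of a random vector. -/
def vecExp {Ω : Type*} [MeasurableSpace Ω] (μ : Measure Ω) {n : ℕ}
    (v : Ω → Fin n → ℝ) : Fin n → ℝ :=
  fun i => ∫ ω, v ω i ∂μ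

section SpectralAux

open scoped RealInnerProductSpace

variable {d : ℕ} {M : Matrix (Fin d) (Fin d) ℝ}

private lemma inner_eq_dot (x y : EuclideanSpace ℝ (Fin d)) : ⟪x, y⟫ = ⇑x ⬝ᵥ ⇑y := by
  simp [PiLp.inner_apply, dotProduct, RCLike.inner_apply, conj_trivial]
  exact Finset.sum_congr rfl fun _ _ => mul_comm _ _

private lemma parseval (hM : M.IsHermitian) (v w : Fin d → ℝ) :
    v ⬝ᵥ w = ∑ i, (⇑(hM.eigenvectorBasis i) ⬝ᵥ v) * (⇑(hM.eigenvectorBasis i) ⬝ᵥ w) := by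
  have h := hM.eigenvectorBasis.sum_inner_mul_inner
      ((WithLp.equiv 2 (Fin d → ℝ)).symm v) ((WithLp.equiv 2 (Fin d → ℝ)).symm w)
  simp only [inner_eq_dot, WithLp.equiv_symm_apply, WithLp.ofLp_toLp] at h
  rw [← h]
  refine Finset.sum_congr rfl fun i _ => ?_
  rw [dotProduct_comm _ v]

private lemma coord_mulVec (hM : M.IsHermitian) (v : Fin d → ℝ) (i : Fin d) :
    ⇑(hM.eigenvectorBasis i) ⬝ᵥ (M *ᵥ v)
      = hM.eigenvalues i * (⇑(hM.eigenvectorBasis i) ⬝ᵥ v) := by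
  rw [Matrix.dotProduct_mulVec, ← Matrix.mulVec_transpose,
    ← Matrix.conjTranspose_eq_transpose_of_trivial, hM.eq,
    hM.mulVec_eigenvectorBasis, smul_dotProduct, smul_eq_mul]

private lemma basis_dot (hM : M.IsHermitian) (i j : Fin d) :
    ⇑(hM.eigenvectorBasis i) ⬝ᵥ ⇑(hM.eigenvectorBasis j) = if i = j then 1 else 0 := by
  rw [← inner_eq_dot]
  exact orthonormal_iff_ite.mp hM.eigenvectorBasis.orthonormal i j

private lemma l2norm_eq (v : Fin d → ℝ) : l2norm v = Real.sqrt (v ⬝ᵥ v) := by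
  unfold l2norm; congr 1; simp [dotProduct, sq]

private lemma l2norm_one_iff (v : Fin d → ℝ) : l2norm v = 1 ↔ v ⬝ᵥ v = 1 := by
  rw [l2norm_eq]
  constructor
  · intro h
    have h0 : 0 ≤ v ⬝ᵥ v := by
      simp only [dotProduct]
      exact Finset.sum_nonneg fun i _ => mul_self_nonneg _
    nlinarith [Real.sq_sqrt h0, h]
  · intro h; rw [h, Real.sqrt_one]

private lemma basis_unit (hM : M.IsHermitian) (i : Fin d) :
    ⇑(hM.eigenvectorBasis i) ⬝ᵥ ⇑(hM.eigenvectorBasis i) = 1 := by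
  simp [basis_dot hM]

private lemma dot_self_sum (hM : M.IsHermitian) (v : Fin d → ℝ) :
    v ⬝ᵥ v = ∑ i, (⇑(hM.eigenvectorBasis i) ⬝ᵥ v) ^ 2 := by
  rw [parseval hM v v]; simp [sq]

private lemma rayleigh_sum (hM : M.IsHermitian) (v : Fin d → ℝ) :
    v ⬝ᵥ (M *ᵥ v) = ∑ i, hM.eigenvalues i * (⇑(hM.eigenvectorBasis i) ⬝ᵥ v) ^ 2 := by
  rw [parseval hM v (M *ᵥ v)]
  refine Finset.sum_congr rfl fun i _ => ?_
  rw [coord_mulVec hM]; ring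

private lemma mulVec_dot_self_sum (hM : M.IsHermitian) (v : Fin d → ℝ) :
    (M *ᵥ v) ⬝ᵥ (M *ᵥ v)
      = ∑ i, (hM.eigenvalues i) ^ 2 * (⇑(hM.eigenvectorBasis i) ⬝ᵥ v) ^ 2 := by
  rw [dot_self_sum hM]
  refine Finset.sum_congr rfl fun i _ => ?_
  rw [coord_mulVec hM]; ring

private lemma specNorm_eq_sup (ne : (Finset.univ : Finset (Fin d)).Nonempty)
    (hM : M.PosSemidef) :
    specNorm M = Finset.univ.sup' ne hM.1.eigenvalues := by
  set Λ := Finset.univ.sup' ne hM.1.eigenvalues with hΛ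
  have hev : ∀ i, 0 ≤ hM.1.eigenvalues i := hM.eigenvalues_nonneg
  have hle : ∀ i, hM.1.eigenvalues i ≤ Λ := fun i => Finset.le_sup' _ (Finset.mem_univ i)
  obtain ⟨i0, _, hi0⟩ := Finset.exists_mem_eq_sup' ne hM.1.eigenvalues
  rw [← hΛ] at hi0
  have hΛ0 : 0 ≤ Λ := by rw [hi0]; exact hev i0
  have hub : ∀ c ∈ {c : ℝ | ∃ v : Fin d → ℝ, l2norm v = 1 ∧ c = l2norm (M *ᵥ v)}, c ≤ Λ := by
    rintro c ⟨v, hv, rfl⟩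
    rw [l2norm_one_iff] at hv
    rw [l2norm_eq]
    have key : (M *ᵥ v) ⬝ᵥ (M *ᵥ v) ≤ Λ ^ 2 := by
      rw [mulVec_dot_self_sum hM.1]
      calc ∑ i, (hM.1.eigenvalues i) ^ 2 * (⇑(hM.1.eigenvectorBasis i) ⬝ᵥ v) ^ 2
          ≤ ∑ i, Λ ^ 2 * (⇑(hM.1.eigenvectorBasis i) ⬝ᵥ v) ^ 2 := by
            refine Finset.sum_le_sum fun i _ => ?_
            exact mul_le_mul_of_nonneg_right
              (pow_le_pow_left₀ (hev i) (hle i) 2) (sq_nonneg _)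
        _ = Λ ^ 2 := by rw [← Finset.mul_sum, ← dot_self_sum hM.1, hv, mul_one]
    calc Real.sqrt ((M *ᵥ v) ⬝ᵥ (M *ᵥ v)) ≤ Real.sqrt (Λ ^ 2) := Real.sqrt_le_sqrt key
      _ = Λ := by rw [Real.sqrt_sq hΛ0]
  have hmem : Λ ∈ {c : ℝ | ∃ v : Fin d → ℝ, l2norm v = 1 ∧ c = l2norm (M *ᵥ v)} := by
    refine ⟨⇑(hM.1.eigenvectorBasis i0), (l2norm_one_iff _).mpr (basis_unit hM.1 i0), ?_⟩
    rw [hM.1.mulVec_eigenvectorBasis, l2norm_eq]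
    rw [smul_dotProduct, dotProduct_smul, basis_unit hM.1 i0]
    simp only [smul_eq_mul, mul_one]
    rw [← sq, Real.sqrt_sq (hev i0), ← hi0]
  exact le_antisymm (csSup_le ⟨Λ, hmem⟩ hub) (le_csSup ⟨Λ, hub⟩ hmem)

private lemma transpose_eq_self (hM : M.IsHermitian) : Mᵀ = M := by
  rw [← Matrix.conjTranspose_eq_transpose_of_trivial, hM.eq]

private lemma sigma_eq_inf (hM : M.PosSemidef)
    (hne : (Finset.univ.filter fun i => 0 < hM.1.eigenvalues i).Nonempty) :
    sigmaMinPos M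
      = (Finset.univ.filter fun i => 0 < hM.1.eigenvalues i).inf' hne hM.1.eigenvalues := by
  set μ := (Finset.univ.filter fun i => 0 < hM.1.eigenvalues i).inf' hne hM.1.eigenvalues
    with hμdef
  obtain ⟨i1, hi1mem, hi1⟩ := Finset.exists_mem_eq_inf' hne hM.1.eigenvalues
  rw [← hμdef] at hi1
  have hμpos : 0 < μ := by
    rw [hi1]; exact (Finset.mem_filter.mp hi1mem).2
  have hMT : Mᵀ = M := transpose_eq_self hM.1
  have hmem : μ ∈ {s : ℝ | 0 < s ∧ ∃ v : Fin d → ℝ, v ≠ 0 ∧ (Mᵀ * M) *ᵥ v = (s ^ 2) • v} := by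
    refine ⟨hμpos, ⇑(hM.1.eigenvectorBasis i1), ?_, ?_⟩
    · intro h
      have h1 := basis_unit hM.1 i1
      rw [h] at h1; simp at h1
    · rw [hMT, ← Matrix.mulVec_mulVec, hM.1.mulVec_eigenvectorBasis, Matrix.mulVec_smul,
        hM.1.mulVec_eigenvectorBasis, smul_smul, ← sq, hi1]
  have hlb : ∀ s ∈ {s : ℝ | 0 < s ∧ ∃ v : Fin d → ℝ, v ≠ 0 ∧ (Mᵀ * M) *ᵥ v = (s ^ 2) • v},
      μ ≤ s := by
    rintro s ⟨hs, v, hv0, heq⟩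
    have hcoord : ∀ i, (hM.1.eigenvalues i ^ 2 - s ^ 2) * (⇑(hM.1.eigenvectorBasis i) ⬝ᵥ v)
        = 0 := by
      intro i
      have h1 := congrArg (fun w => ⇑(hM.1.eigenvectorBasis i) ⬝ᵥ w) heq
      simp only [hMT, ← Matrix.mulVec_mulVec, dotProduct_smul, smul_eq_mul] at h1
      rw [coord_mulVec hM.1, coord_mulVec hM.1] at h1
      nlinarith [h1]
    obtain ⟨i, hci⟩ : ∃ i, ⇑(hM.1.eigenvectorBasis i) ⬝ᵥ v ≠ 0 := by
      by_contra hall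
      push_neg at hall
      have : v ⬝ᵥ v = 0 := by
        rw [dot_self_sum hM.1]
        exact Finset.sum_eq_zero fun i _ => by rw [hall i]; ring
      exact hv0 (dotProduct_self_eq_zero.mp this)
    have hsq : hM.1.eigenvalues i ^ 2 = s ^ 2 := by
      rcases mul_eq_zero.mp (hcoord i) with h | h
      · linarith [h]
      · exact absurd h hci
    have heig : hM.1.eigenvalues i = s := by
      have h0 := hM.eigenvalues_nonneg i
      nlinarith [hsq]
    have hifil : i ∈ Finset.univ.filter fun j => 0 < hM.1.eigenvalues j :=
      Finset.mem_filter.mpr ⟨Finset.mem_univ i, heig ▸ hs⟩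
    calc μ ≤ hM.1.eigenvalues i := Finset.inf'_le _ hifil
      _ = s := heig
  exact le_antisymm (csInf_le ⟨0, fun s hs => hs.1.le⟩ hmem) (le_csInf ⟨μ, hmem⟩ hlb)

private lemma rayleigh_le_sup (ne : (Finset.univ : Finset (Fin d)).Nonempty)
    (hM : M.IsHermitian) (v : Fin d → ℝ) (hv : v ⬝ᵥ v = 1) :
    v ⬝ᵥ (M *ᵥ v) ≤ Finset.univ.sup' ne hM.eigenvalues := by
  rw [rayleigh_sum hM]
  calc ∑ i, hM.eigenvalues i * (⇑(hM.eigenvectorBasis i) ⬝ᵥ v) ^ 2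
      ≤ ∑ i, (Finset.univ.sup' ne hM.eigenvalues) * (⇑(hM.eigenvectorBasis i) ⬝ᵥ v) ^ 2 :=
        Finset.sum_le_sum fun i _ => mul_le_mul_of_nonneg_right
          (Finset.le_sup' _ (Finset.mem_univ i)) (sq_nonneg _)
    _ = Finset.univ.sup' ne hM.eigenvalues := by
        rw [← Finset.mul_sum, ← dot_self_sum hM, hv, mul_one]

private lemma inf_le_rayleigh (hM : M.PosSemidef)
    (hne : (Finset.univ.filter fun i => 0 < hM.1.eigenvalues i).Nonempty)
    (v : Fin d → ℝ) (hv : v ⬝ᵥ v = 1)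
    (hker : ∀ i, hM.1.eigenvalues i = 0 → ⇑(hM.1.eigenvectorBasis i) ⬝ᵥ v = 0) :
    (Finset.univ.filter fun i => 0 < hM.1.eigenvalues i).inf' hne hM.1.eigenvalues
      ≤ v ⬝ᵥ (M *ᵥ v) := by
  set μ := (Finset.univ.filter fun i => 0 < hM.1.eigenvalues i).inf' hne hM.1.eigenvalues
  rw [rayleigh_sum hM.1]
  calc μ = ∑ i, μ * (⇑(hM.1.eigenvectorBasis i) ⬝ᵥ v) ^ 2 := by
        rw [← Finset.mul_sum, ← dot_self_sum hM.1, hv, mul_one]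
    _ ≤ ∑ i, hM.1.eigenvalues i * (⇑(hM.1.eigenvectorBasis i) ⬝ᵥ v) ^ 2 := by
        refine Finset.sum_le_sum fun i _ => ?_
        rcases (hM.eigenvalues_nonneg i).eq_or_lt with h | h
        · rw [hker i h.symm]; ring_nf; exact le_refl _
        · exact mul_le_mul_of_nonneg_right
            (Finset.inf'_le _ (Finset.mem_filter.mpr ⟨Finset.mem_univ i, h⟩)) (sq_nonneg _)

private lemma exists_pos_eig (hM : M.PosSemidef) (w : Fin d → ℝ)
    (hw : 0 < w ⬝ᵥ (M *ᵥ w)) : ∃ i, 0 < hM.1.eigenvalues i := by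
  by_contra hall
  push_neg at hall
  have hz : ∀ i, hM.1.eigenvalues i = 0 := fun i =>
    le_antisymm (hall i) (hM.eigenvalues_nonneg i)
  rw [rayleigh_sum hM.1] at hw
  have : ∑ i, hM.1.eigenvalues i * (⇑(hM.1.eigenvectorBasis i) ⬝ᵥ w) ^ 2 = 0 :=
    Finset.sum_eq_zero fun i _ => by rw [hz i, zero_mul]
  linarith

variable {n : ℕ}

private lemma rayleigh_form (X : Matrix (Fin n) (Fin d) ℝ) (q : Fin n → ℝ) (v w : Fin d → ℝ) :
    v ⬝ᵥ ((Xᵀ * Matrix.diagonal q * X) *ᵥ w) = ∑ j, q j * ((X *ᵥ v) j * (X *ᵥ w) j) := by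
  rw [← Matrix.mulVec_mulVec, ← Matrix.mulVec_mulVec, Matrix.dotProduct_mulVec,
    Matrix.vecMul_transpose]
  simp only [dotProduct, Matrix.mulVec_diagonal]
  exact Finset.sum_congr rfl fun j _ => by ring

private lemma posSemidef_XDX (X : Matrix (Fin n) (Fin d) ℝ) {q : Fin n → ℝ}
    (hq : ∀ j, 0 ≤ q j) : (Xᵀ * Matrix.diagonal q * X).PosSemidef := by
  have h := (Matrix.posSemidef_diagonal_iff.mpr hq).conjTranspose_mul_mul_same X
  rwa [Matrix.conjTranspose_eq_transpose_of_trivial] at h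

private lemma sigmaMinPos_zero {m k : ℕ} : sigmaMinPos (0 : Matrix (Fin m) (Fin k) ℝ) = 0 := by
  unfold sigmaMinPos
  have hT : {s : ℝ | 0 < s ∧ ∃ v : Fin k → ℝ, v ≠ 0 ∧
      ((0 : Matrix (Fin m) (Fin k) ℝ)ᵀ * (0 : Matrix (Fin m) (Fin k) ℝ)) *ᵥ v
        = (s ^ 2) • v} = ∅ := by
    refine Set.eq_empty_iff_forall_notMem.mpr ?_
    rintro s ⟨hs, v, hv, heq⟩
    rw [Matrix.transpose_zero, Matrix.zero_mul, Matrix.zero_mulVec] at heq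
    refine hv ?_
    have hs2 : (s ^ 2 : ℝ) ≠ 0 := pow_ne_zero _ hs.ne'
    rcases smul_eq_zero.mp heq.symm with h | h
    exacts [absurd h hs2, h]
  rw [hT, Real.sInf_empty]

end SpectralAux

/-- effective condition number under weighting.
For a diagonal weighting `M₂ = diag(p₁,…,p_n)` with `p_i > 0`,
`σ⁺min(𝕏̂)/‖𝕏̂‖ ≤ (max_i p_i / min_i p_i) · σ⁺min(𝕏)/‖𝕏‖`,
where `𝕏 = XᵀX` and `𝕏̂ = XᵀM₂X`. -/
theorem randomly_weighted_gd_stmt18 {n d : ℕ} (hn : 0 < n)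
    (X : Matrix (Fin n) (Fin d) ℝ)
    (p : Fin n → ℝ) (hp : ∀ i, 0 < p i) :
    sigmaMinPos (Xᵀ * Matrix.diagonal p * X) / specNorm (Xᵀ * Matrix.diagonal p * X)
      ≤ ((Finset.univ : Finset (Fin n)).sup' ⟨⟨0, hn⟩, Finset.mem_univ _⟩ p
            / (Finset.univ : Finset (Fin n)).inf' ⟨⟨0, hn⟩, Finset.mem_univ _⟩ p)
          * (sigmaMinPos (Xᵀ * X) / specNorm (Xᵀ * X)) := by
  classical
  set pmax := (Finset.univ : Finset (Fin n)).sup' ⟨⟨0, hn⟩, Finset.mem_univ _⟩ p with hpmaxd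
  set pmin := (Finset.univ : Finset (Fin n)).inf' ⟨⟨0, hn⟩, Finset.mem_univ _⟩ p with hpmind
  have hpmin_pos : 0 < pmin := by
    obtain ⟨j0, _, hj0⟩ := Finset.exists_mem_eq_inf'
      (⟨⟨0, hn⟩, Finset.mem_univ _⟩ : (Finset.univ : Finset (Fin n)).Nonempty) p
    rw [hpmind, hj0]; exact hp j0
  have hpminle : ∀ j, pmin ≤ p j := fun j => Finset.inf'_le _ (Finset.mem_univ j)
  have hpmaxge : ∀ j, p j ≤ pmax := fun j => Finset.le_sup' _ (Finset.mem_univ j)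
  have hpmax_pos : 0 < pmax :=
    lt_of_lt_of_le hpmin_pos (le_trans (hpminle ⟨0, hn⟩) (hpmaxge ⟨0, hn⟩))
  by_cases hX : X = 0
  · have h1 : Xᵀ * Matrix.diagonal p * X = 0 := by rw [hX]; simp
    have h2 : Xᵀ * X = (0 : Matrix (Fin d) (Fin d) ℝ) := by rw [hX]; simp
    rw [h1, h2, sigmaMinPos_zero, zero_div]
    simp
  · obtain ⟨k, l, hkl⟩ : ∃ k l, X k l ≠ 0 := by
      by_contra h
      push_neg at h
      exact hX (by ext k l; exact h k l)
    have hd : (Finset.univ : Finset (Fin d)).Nonempty := ⟨l, Finset.mem_univ l⟩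
    have hdiag1 : Matrix.diagonal (fun _ : Fin n => (1 : ℝ)) = 1 := Matrix.diagonal_one
    have hXX : Xᵀ * X = Xᵀ * Matrix.diagonal (fun _ : Fin n => (1 : ℝ)) * X := by
      rw [hdiag1, Matrix.mul_one]
    rw [hXX]
    set A := Xᵀ * Matrix.diagonal (fun _ : Fin n => (1 : ℝ)) * X with hAdef
    set B := Xᵀ * Matrix.diagonal p * X with hBdef
    have hA : A.PosSemidef := posSemidef_XDX X (fun _ => zero_le_one)
    have hB : B.PosSemidef := posSemidef_XDX X (fun j => (hp j).le)
    -- a vector with positive Rayleigh quotient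
    set u : Fin d → ℝ := Pi.single l 1 with hudef
    have hXu : (X *ᵥ u) k ≠ 0 := by
      simpa [hudef, Matrix.mulVec_single] using hkl
    have hupos : ∀ q : Fin n → ℝ, (∀ j, 0 < q j) →
        0 < u ⬝ᵥ ((Xᵀ * Matrix.diagonal q * X) *ᵥ u) := by
      intro q hq
      rw [rayleigh_form]
      refine Finset.sum_pos' (fun j _ => mul_nonneg (hq j).le (mul_self_nonneg _)) ?_
      exact ⟨k, Finset.mem_univ k, mul_pos (hq k) (mul_self_pos.mpr hXu)⟩
    have hexA : ∃ i, 0 < hA.1.eigenvalues i :=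
      exists_pos_eig hA u (by simpa [hAdef] using hupos _ (fun _ => one_pos))
    have hexB : ∃ i, 0 < hB.1.eigenvalues i :=
      exists_pos_eig hB u (by simpa [hBdef] using hupos p hp)
    have neA : (Finset.univ.filter fun i => 0 < hA.1.eigenvalues i).Nonempty := by
      obtain ⟨i, hi⟩ := hexA
      exact ⟨i, Finset.mem_filter.mpr ⟨Finset.mem_univ i, hi⟩⟩
    have neB : (Finset.univ.filter fun i => 0 < hB.1.eigenvalues i).Nonempty := by
      obtain ⟨i, hi⟩ := hexB
      exact ⟨i, Finset.mem_filter.mpr ⟨Finset.mem_univ i, hi⟩⟩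
    set ΛA := Finset.univ.sup' hd hA.1.eigenvalues with hΛAd
    set ΛB := Finset.univ.sup' hd hB.1.eigenvalues with hΛBd
    set μA := (Finset.univ.filter fun i => 0 < hA.1.eigenvalues i).inf' neA hA.1.eigenvalues
      with hμAd
    set μB := (Finset.univ.filter fun i => 0 < hB.1.eigenvalues i).inf' neB hB.1.eigenvalues
      with hμBd
    rw [specNorm_eq_sup hd hA, specNorm_eq_sup hd hB, sigma_eq_inf hA neA, sigma_eq_inf hB neB]
    rw [← hΛAd, ← hΛBd, ← hμAd, ← hμBd]
    -- bound 4 : pmin * ΛA ≤ ΛB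
    obtain ⟨jA, _, hjA⟩ := Finset.exists_mem_eq_sup' hd hA.1.eigenvalues
    rw [← hΛAd] at hjA
    set w : Fin d → ℝ := ⇑(hA.1.eigenvectorBasis jA) with hwdef
    have hw1 : w ⬝ᵥ w = 1 := basis_unit hA.1 jA
    have hAw : A *ᵥ w = hA.1.eigenvalues jA • w := hA.1.mulVec_eigenvectorBasis jA
    have hRayA_w : w ⬝ᵥ (A *ᵥ w) = ΛA := by
      rw [hAw, dotProduct_smul, hw1, smul_eq_mul, mul_one, ← hjA]
    have hRayB_w_ge : pmin * ΛA ≤ w ⬝ᵥ (B *ᵥ w) := by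
      have hformA : w ⬝ᵥ (A *ᵥ w) = ∑ j, (1 : ℝ) * ((X *ᵥ w) j * (X *ᵥ w) j) :=
        rayleigh_form X _ w w
      have hformB : w ⬝ᵥ (B *ᵥ w) = ∑ j, p j * ((X *ᵥ w) j * (X *ᵥ w) j) :=
        rayleigh_form X p w w
      rw [hformB, ← hRayA_w, hformA, Finset.mul_sum]
      refine Finset.sum_le_sum fun j _ => ?_
      rw [one_mul]
      exact mul_le_mul_of_nonneg_right (hpminle j) (mul_self_nonneg _)
    have h4 : pmin * ΛA ≤ ΛB := le_trans hRayB_w_ge (rayleigh_le_sup hd hB.1 w hw1)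
    -- bound 3 : μB ≤ pmax * μA
    obtain ⟨iA, hiAmem, hiA⟩ := Finset.exists_mem_eq_inf' neA hA.1.eigenvalues
    rw [← hμAd] at hiA
    have hμA_pos : 0 < μA := by rw [hiA]; exact (Finset.mem_filter.mp hiAmem).2
    set v : Fin d → ℝ := ⇑(hA.1.eigenvectorBasis iA) with hvdef
    have hv1 : v ⬝ᵥ v = 1 := basis_unit hA.1 iA
    have hAv : A *ᵥ v = μA • v := by rw [hA.1.mulVec_eigenvectorBasis iA, hiA]
    have hker : ∀ i, hB.1.eigenvalues i = 0 → ⇑(hB.1.eigenvectorBasis i) ⬝ᵥ v = 0 := by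
      intro i hi
      set z : Fin d → ℝ := ⇑(hB.1.eigenvectorBasis i) with hzdef
      have hBz : B *ᵥ z = 0 := by
        rw [hB.1.mulVec_eigenvectorBasis, hi, zero_smul]
      have hXz : X *ᵥ z = 0 := by
        have h0 : (0:ℝ) = ∑ j, p j * ((X *ᵥ z) j * (X *ᵥ z) j) := by
          rw [← rayleigh_form X p z z, ← hBdef, hBz, dotProduct_zero]
        have hall := (Finset.sum_eq_zero_iff_of_nonneg
          (fun j _ => mul_nonneg (hp j).le (mul_self_nonneg ((X *ᵥ z) j)))).mp h0.symm
        funext j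
        have hj := hall j (Finset.mem_univ j)
        rcases mul_eq_zero.mp hj with h | h
        · exact absurd h (hp j).ne'
        · exact mul_self_eq_zero.mp h
      have h5 : z ⬝ᵥ (A *ᵥ v) = 0 := by
        rw [hAdef, rayleigh_form]
        refine Finset.sum_eq_zero fun j _ => ?_
        rw [hXz]; simp
      rw [hAv, dotProduct_smul, smul_eq_mul] at h5
      rcases mul_eq_zero.mp h5 with h | h
      · exact absurd h hμA_pos.ne'
      · exact h
    have h3a : μB ≤ v ⬝ᵥ (B *ᵥ v) := inf_le_rayleigh hB neB v hv1 hker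
    have h3b : v ⬝ᵥ (B *ᵥ v) ≤ pmax * μA := by
      have hformA : v ⬝ᵥ (A *ᵥ v) = ∑ j, (1 : ℝ) * ((X *ᵥ v) j * (X *ᵥ v) j) :=
        rayleigh_form X _ v v
      have hformB : v ⬝ᵥ (B *ᵥ v) = ∑ j, p j * ((X *ᵥ v) j * (X *ᵥ v) j) :=
        rayleigh_form X p v v
      have hRayA_v : v ⬝ᵥ (A *ᵥ v) = μA := by
        rw [hAv, dotProduct_smul, hv1, smul_eq_mul, mul_one]
      rw [hformB, ← hRayA_v, hformA, Finset.mul_sum]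
      refine Finset.sum_le_sum fun j _ => ?_
      rw [one_mul]
      exact mul_le_mul_of_nonneg_right (hpmaxge j) (mul_self_nonneg _)
    have h3 : μB ≤ pmax * μA := le_trans h3a h3b
    -- conclude
    have hΛA_pos : 0 < ΛA := by
      obtain ⟨i, hi⟩ := hexA
      exact lt_of_lt_of_le hi (Finset.le_sup' _ (Finset.mem_univ i))
    have hdenom_pos : 0 < pmin * ΛA := mul_pos hpmin_pos hΛA_pos
    have hfinal : μB / ΛB ≤ (pmax * μA) / (pmin * ΛA) :=
      div_le_div₀ (mul_nonneg hpmax_pos.le hμA_pos.le) h3 hdenom_pos h4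
    calc μB / ΛB ≤ (pmax * μA) / (pmin * ΛA) := hfinal
      _ = pmax / pmin * (μA / ΛA) := by rw [div_mul_div_comm]
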